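/- arXiv:1910.14174 — 4 statements merged into one kernel-verified Lean document; each statement's English description precedes it below -/
import Mathlib

section
/- Let G be a finite group and M a proper subgroup of G. Then the union ⋃_{g∈G} gMg^{-1} of all conjugates of M is a proper subset of G; quantitatively, its cardinality is at most |G| - [G:M] + 1. -/
open scoped Classical

/-- Jordan's lemma: for a proper subgroup `M` of a finite group `G`, the union of all
conjugates of `M` is a proper subset of `G`, of cardinality at most `|G| - [G:M] + 1`. -/
theorem stmt_0 {G : Type*} [Group G] [Fintype G] (M : Subgroup G) (hM : M ≠ ⊤) :
    (⋃ g : G, (fun m => g * m * g⁻¹) '' (M : Set G)) ≠ Set.univ ∧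
    (⋃ g : G, (fun m => g * m * g⁻¹) '' (M : Set G)).ncard ≤
      Fintype.card G - M.index + 1 := by
  classical
  set N := Subgroup.normalizer (M : Set G) with hN
  set S : Set G := ⋃ g : G, (fun m => g * m * g⁻¹) '' (M : Set G) with hS
  haveI : Fintype (G ⧸ N) := Fintype.ofFinite _
  set c : ℕ := Nat.card M with hc
  have hc1 : 1 ≤ c := Nat.one_le_iff_ne_zero.mpr Nat.card_pos.ne'
  -- each conjugate, parametrized by the quotient by the normalizer
  set F : G ⧸ N → Set G := fun q => (fun m => q.out * m * q.out⁻¹) '' (M : Set G)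
    with hF
  have hone : ∀ q, (1 : G) ∈ F q := by
    intro q
    exact ⟨1, M.one_mem, by group⟩
  have hcardF : ∀ q, (F q).ncard = c := by
    intro q
    rw [Set.ncard_image_of_injective _ (fun a b hab => by
      simpa using mul_left_cancel (mul_right_cancel hab))]
    rw [hc, ← Nat.card_coe_set_eq]
    rfl
  -- the key inclusion
  have hsub : S.toFinset ⊆ insert (1 : G)
      (Finset.univ.biUnion fun q : G ⧸ N => (F q).toFinset.erase 1) := by
    intro x hx
    rw [Set.mem_toFinset, hS, Set.mem_iUnion] at hx
    obtain ⟨g, m, hm, rfl⟩ := hx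
    by_cases h1 : g * m * g⁻¹ = 1
    · simp [h1]
    · refine Finset.mem_insert_of_mem (Finset.mem_biUnion.mpr
        ⟨QuotientGroup.mk g, Finset.mem_univ _, Finset.mem_erase.mpr ⟨h1, ?_⟩⟩)
      rw [Set.mem_toFinset]
      set g' : G := (QuotientGroup.mk g : G ⧸ N).out with hg'
      have hgg' : (QuotientGroup.mk g' : G ⧸ N) = QuotientGroup.mk g :=
        QuotientGroup.out_eq' _
      have hn : g'⁻¹ * g ∈ N := by
        rwa [QuotientGroup.eq] at hgg'
      have hmem : (g'⁻¹ * g) * m * (g'⁻¹ * g)⁻¹ ∈ M := by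
        rw [hN, Subgroup.mem_normalizer_iff] at hn
        exact (hn m).mp hm
      exact ⟨(g'⁻¹ * g) * m * (g'⁻¹ * g)⁻¹, hmem, by
        show g' * ((g'⁻¹ * g) * m * (g'⁻¹ * g)⁻¹) * g'⁻¹ = g * m * g⁻¹; group⟩
  -- cardinality bound via the quotient
  have hcard : S.ncard ≤ 1 + N.index * (c - 1) := by
    rw [Set.ncard_eq_toFinset_card']
    calc S.toFinset.card ≤ _ := Finset.card_le_card hsub
      _ ≤ 1 + (Finset.univ.biUnion fun q : G ⧸ N => (F q).toFinset.erase 1).card := by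
          rw [Nat.add_comm]; exact Finset.card_insert_le _ _
      _ ≤ 1 + ∑ q : G ⧸ N, ((F q).toFinset.erase 1).card :=
          Nat.add_le_add_left (Finset.card_biUnion_le) 1
      _ = 1 + ∑ _q : G ⧸ N, (c - 1) := by
          congr 1
          refine Finset.sum_congr rfl fun q _ => ?_
          rw [Finset.card_erase_of_mem (Set.mem_toFinset.mpr (hone q)),
            ← Set.ncard_eq_toFinset_card', hcardF]
      _ = 1 + N.index * (c - 1) := by
          rw [Finset.sum_const, Finset.card_univ, smul_eq_mul]
          congr 2
          rw [Subgroup.index, Nat.card_eq_fintype_card]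
  have hNM : N.index ≤ M.index := by
    refine Nat.le_of_dvd (Nat.pos_of_ne_zero M.index_ne_zero_of_finite) ?_
    exact Subgroup.index_dvd_of_le Subgroup.le_normalizer
  have hprod : M.index * c = Fintype.card G := by
    rw [hc, Subgroup.index_mul_card, Nat.card_eq_fintype_card]
  have hidx2 : 2 ≤ M.index := by
    rcases Nat.lt_or_ge M.index 2 with h | h
    · interval_cases h' : M.index
      · exact absurd h' M.index_ne_zero_of_finite
      · exact absurd (Subgroup.index_eq_one.mp h') hM
    · exact h
  have hmul : N.index * (c - 1) ≤ M.index * (c - 1) :=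
    Nat.mul_le_mul_right _ hNM
  have hsubm : M.index * (c - 1) = Fintype.card G - M.index := by
    rw [Nat.mul_sub, hprod, mul_one]
  have hidxle : M.index ≤ Fintype.card G := by
    calc M.index = M.index * 1 := (mul_one _).symm
      _ ≤ M.index * c := Nat.mul_le_mul_left _ hc1
      _ = Fintype.card G := hprod
  have hbound : S.ncard ≤ Fintype.card G - M.index + 1 := by omega
  refine ⟨?_, hbound⟩
  intro habs
  have : S.ncard = Fintype.card G := by
    rw [habs, Set.ncard_univ, Nat.card_eq_fintype_card]
  omega
end

section
/- Let S₁, …, Sₙ (n ≥ 2) be finite groups, each having no nontrivial abelian quotient (i.e., each Sᵢ is perfect). If H is a subgroup of the product S₁ × ⋯ × Sₙ such that for every pair of indices i < j the projection H → Sᵢ × Sⱼ is surjective, then H = S₁ × ⋯ × Sₙ. -/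
/-- The subgroup of a product group consisting of elements trivial on a set of coordinates. -/
private def trivOn {ι : Type*} (S : ι → Type*) [∀ i, Group (S i)] (A : Set ι) :
    Subgroup (∀ i, S i) where
  carrier := {h | ∀ k ∈ A, h k = 1}
  one_mem' := fun k _ => rfl
  mul_mem' := by
    intro a b ha hb k hk
    simp [Pi.mul_apply, ha k hk, hb k hk]
  inv_mem' := by
    intro a ha k hk
    simp [Pi.inv_apply, ha k hk]

private lemma mem_trivOn {ι : Type*} {S : ι → Type*} [∀ i, Group (S i)] {A : Set ι}
    {h : ∀ i, S i} : h ∈ trivOn S A ↔ ∀ k ∈ A, h k = 1 := Iff.rfl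

open scoped commutatorElement

/-- If `H` is a subgroup of a product of perfect finite groups surjecting onto each pair of
factors, then `H` is the whole product. -/
theorem stmt_3 {n : ℕ} (hn : 2 ≤ n) (S : Fin n → Type*) [∀ i, Group (S i)]
    [∀ i, Finite (S i)] (hperf : ∀ i, commutator (S i) = ⊤)
    (H : Subgroup (∀ i, S i))
    (hsurj : ∀ i j : Fin n, i < j →
      Function.Surjective fun h : H => ((h : ∀ k, S k) i, (h : ∀ k, S k) j)) :
    H = ⊤ := by
  classical
  haveI hnt : Nontrivial (Fin n) := Fin.nontrivial_iff_two_le.mpr hn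
  have hsurj2 : ∀ i j : Fin n, i ≠ j → ∀ (a : S i) (b : S j),
      ∃ h, h ∈ H ∧ h i = a ∧ h j = b := by
    intro i j hij a b
    rcases lt_or_gt_of_ne hij with h | h
    · obtain ⟨⟨x, hx⟩, he⟩ := hsurj i j h (a, b)
      exact ⟨x, hx, congrArg Prod.fst he, congrArg Prod.snd he⟩
    · obtain ⟨⟨x, hx⟩, he⟩ := hsurj j i h (b, a)
      exact ⟨x, hx, congrArg Prod.snd he, congrArg Prod.fst he⟩
  have hsurj1 : ∀ (i : Fin n) (a : S i), ∃ h, h ∈ H ∧ h i = a := by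
    intro i a
    obtain ⟨j, hj⟩ := exists_ne i
    obtain ⟨h, hH, h1, _⟩ := hsurj2 i j (Ne.symm hj) a 1
    exact ⟨h, hH, h1⟩
  have key : ∀ T : Finset (Fin n), ∀ f : (∀ k, S k), ∃ h, h ∈ H ∧ ∀ k ∈ T, h k = f k := by
    intro T
    induction T using Finset.strongInduction with
    | _ T ih =>
      rcases T.eq_empty_or_nonempty with rfl | ⟨i, hi⟩
      · exact fun f => ⟨1, H.one_mem, by simp⟩
      intro f
      set T' : Finset (Fin n) := T.erase i with hT'
      have hss : T' ⊂ T := Finset.erase_ssubset hi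
      have IH := ih T' hss
      set N : Subgroup (S i) := (H ⊓ trivOn S ↑T').map (Pi.evalMonoidHom S i) with hN
      have hNmem : ∀ s : S i, s ∈ N ↔ ∃ g, (g ∈ H ∧ ∀ k ∈ T', g k = 1) ∧ g i = s := by
      -- membership unfolding
        intro s
        rw [hN, Subgroup.mem_map]
        constructor
        · rintro ⟨g, hg, rfl⟩
          exact ⟨g, ⟨hg.1, fun k hk => hg.2 k (Finset.mem_coe.mpr hk)⟩, rfl⟩
        · rintro ⟨g, ⟨h1, h2⟩, rfl⟩
          exact ⟨g, ⟨h1, fun k hk => h2 k (Finset.mem_coe.mp hk)⟩, rfl⟩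
      haveI hNn : N.Normal := by
        constructor
        intro m hm s
        obtain ⟨g, ⟨gH, gtriv⟩, gi⟩ := (hNmem m).1 hm
        obtain ⟨u, uH, ui⟩ := hsurj1 i s
        refine (hNmem _).2 ⟨u * g * u⁻¹,
          ⟨H.mul_mem (H.mul_mem uH gH) (H.inv_mem uH), ?_⟩, ?_⟩
        · intro k hk; simp [Pi.mul_apply, Pi.inv_apply, gtriv k hk]
        · simp [Pi.mul_apply, Pi.inv_apply, gi, ui]
      set ψ : (∀ k, S k) →* (S i ⧸ N) :=
        (QuotientGroup.mk' N).comp (Pi.evalMonoidHom S i) with hψ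
      have ψapp : ∀ g : ∀ k, S k, ψ g = QuotientGroup.mk' N (g i) := fun g => rfl
      have ψone : ∀ g : ∀ k, S k, g ∈ H → (∀ k ∈ T', g k = 1) → ψ g = 1 := by
        intro g gH gt
        have : g i ∈ N := (hNmem _).2 ⟨g, ⟨gH, gt⟩, rfl⟩
        rw [ψapp]
        exact (QuotientGroup.eq_one_iff _).mpr this
      set Qf : Fin n → Subgroup (S i ⧸ N) :=
        fun j => (H ⊓ trivOn S {k | k ∈ T' ∧ k ≠ j}).map ψ with hQf
      have QfMem : ∀ (j : Fin n) (x : ∀ k, S k), x ∈ H → (∀ k ∈ T', k ≠ j → x k = 1) →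
          ψ x ∈ Qf j := by
        intro j x xH hx
        exact Subgroup.mem_map.mpr ⟨x, ⟨xH, fun k hk => hx k hk.1 hk.2⟩, rfl⟩
      -- decomposition lemma
      have D : ∀ U : Finset (Fin n), U ⊆ T' → ∀ x : ∀ k, S k, x ∈ H →
          (∀ k ∈ T', k ∉ U → x k = 1) → ψ x ∈ U.sup Qf := by
        intro U
        induction U using Finset.induction with
        | empty =>
          intro _ x xH hx
          have : ψ x = 1 := ψone x xH (fun k hk => hx k hk (by simp))
          simp [this]
        | @insert j U' hjU' ihU =>
          intro hsub x xH hx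
          have hjT' : j ∈ T' := hsub (Finset.mem_insert_self _ _)
          obtain ⟨z, zH, hz⟩ := IH (Pi.mulSingle j (x j))
          have zj : z j = x j := by
            have := hz j hjT'; simpa using this
          have zk : ∀ k ∈ T', k ≠ j → z k = 1 := by
            intro k hk hkj
            have := hz k hk
            rwa [Pi.mulSingle_eq_of_ne hkj] at this
          have hzQ : ψ z ∈ Qf j := QfMem j z zH zk
          have hx' : ψ (x * z⁻¹) ∈ U'.sup Qf := by
            refine ihU (fun k hk => hsub (Finset.mem_insert_of_mem hk))
              (x * z⁻¹) (H.mul_mem xH (H.inv_mem zH)) ?_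
            intro k hk hkU'
            by_cases hkj : k = j
            · subst hkj; simp [Pi.mul_apply, Pi.inv_apply, zj]
            · have hki : k ∉ insert j U' := by simp [hkj, hkU']
              simp [Pi.mul_apply, Pi.inv_apply, hx k hk hki, zk k hk hkj]
          have hxe : ψ x = ψ (x * z⁻¹) * ψ z := by
            rw [← map_mul]; congr 1; group
          rw [hxe]
          exact Subgroup.mul_mem _
            (Finset.sup_mono (f := Qf) (Finset.subset_insert j U') hx')
            (Finset.le_sup (f := Qf) (Finset.mem_insert_self j U') hzQ)
      -- distinct-coordinate commuting
      have case1 : ∀ j l : Fin n, j ≠ l →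
          ∀ x : ∀ k, S k, x ∈ H → (∀ k ∈ T', k ≠ j → x k = 1) →
          ∀ y : ∀ k, S k, y ∈ H → (∀ k ∈ T', k ≠ l → y k = 1) →
          Commute (ψ x) (ψ y) := by
        intro j l hjl x xH hx y yH hy
        rw [← commutatorElement_eq_one_iff_commute, ← map_commutatorElement]
        have hcH : ⁅x, y⁆ ∈ H := by
          rw [commutatorElement_def]
          exact H.mul_mem (H.mul_mem (H.mul_mem xH yH) (H.inv_mem xH)) (H.inv_mem yH)
        refine ψone _ hcH ?_
        intro k hk
        by_cases hkj : k = j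
        · subst hkj
          have : y k = 1 := hy k hk hjl
          simp [commutatorElement_def, Pi.mul_apply, Pi.inv_apply, this]
        · have : x k = 1 := hx k hk hkj
          simp [commutatorElement_def, Pi.mul_apply, Pi.inv_apply, this]
      -- same-coordinate commuting
      have case2 : ∀ j, j ∈ T' →
          ∀ x : ∀ k, S k, x ∈ H → (∀ k ∈ T', k ≠ j → x k = 1) →
          ∀ y : ∀ k, S k, y ∈ H → (∀ k ∈ T', k ≠ j → y k = 1) →
          Commute (ψ x) (ψ y) := by
        intro j hj x xH hx y yH hy
        have hij : i ≠ j := fun h => (Finset.mem_erase.1 hj).1 h.symm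
        obtain ⟨u, uH, ui, uj⟩ := hsurj2 i j hij 1 (y j)
        have hw : ψ (y * u⁻¹) ∈ (T'.erase j).sup Qf := by
          refine D _ (Finset.erase_subset _ _) _ (H.mul_mem yH (H.inv_mem uH)) ?_
          intro k hk hkU
          have hkj : k = j := by
            by_contra hne
            exact hkU (Finset.mem_erase.2 ⟨hne, hk⟩)
          subst hkj
          simp [Pi.mul_apply, Pi.inv_apply, uj]
        have ψu : ψ u = 1 := by
          rw [ψapp, ui]; simp
        have ψyw : ψ y = ψ (y * u⁻¹) := by
          rw [map_mul, map_inv, ψu]; simp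
        rw [ψyw]
        have hle : (T'.erase j).sup Qf ≤ Subgroup.centralizer {ψ x} := by
          apply Finset.sup_le
          intro l hl q hq
          obtain ⟨w, ⟨wH, wtriv⟩, rfl⟩ := Subgroup.mem_map.1 hq
          rw [Subgroup.mem_centralizer_iff]
          rintro g hg
          rw [Set.mem_singleton_iff] at hg; subst hg
          have hlj : l ≠ j := (Finset.mem_erase.1 hl).1
          exact case1 j l (fun e => hlj e.symm) x xH hx w wH
            (fun k hk hkl => wtriv k ⟨hk, hkl⟩)
        exact hle hw (ψ x) (Set.mem_singleton _)
      -- all elements of the total sup commute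
      have gen : ∀ j ∈ T', ∀ q ∈ Qf j, T'.sup Qf ≤ Subgroup.centralizer {q} := by
        intro j hj q hq
        obtain ⟨xq, ⟨xqH, xqt⟩, rfl⟩ := Subgroup.mem_map.1 hq
        apply Finset.sup_le
        intro l hl r hr
        obtain ⟨yr, ⟨yrH, yrt⟩, rfl⟩ := Subgroup.mem_map.1 hr
        rw [Subgroup.mem_centralizer_iff]
        rintro g hg
        rw [Set.mem_singleton_iff] at hg; subst hg
        by_cases hjl : j = l
        · subst hjl
          exact case2 j hj xq xqH (fun k hk hkj => xqt k ⟨hk, hkj⟩)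
            yr yrH (fun k hk hkj => yrt k ⟨hk, hkj⟩)
        · exact case1 j l hjl xq xqH (fun k hk hkj => xqt k ⟨hk, hkj⟩)
            yr yrH (fun k hk hkl => yrt k ⟨hk, hkl⟩)
      have hc : ∀ z ∈ T'.sup Qf, T'.sup Qf ≤ Subgroup.centralizer {z} := by
        intro z hz
        apply Finset.sup_le
        intro j hj q hq
        rw [Subgroup.mem_centralizer_iff]
        rintro g hg
        rw [Set.mem_singleton_iff] at hg; subst hg
        have h1 := gen j hj q hq hz
        rw [Subgroup.mem_centralizer_iff] at h1
        exact (h1 q (Set.mem_singleton _)).symm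
      -- commutators of S i lie in N
      have comm : ∀ a b : S i, ⁅a, b⁆ ∈ N := by
        intro a b
        obtain ⟨x, xH, xi⟩ := hsurj1 i a
        obtain ⟨y, yH, yi⟩ := hsurj1 i b
        have hx : ψ x ∈ T'.sup Qf := D T' le_rfl x xH (fun k hk hk' => absurd hk hk')
        have hy : ψ y ∈ T'.sup Qf := D T' le_rfl y yH (fun k hk hk' => absurd hk hk')
        have hcomm : Commute (ψ x) (ψ y) := hc (ψ x) hx hy (ψ x) (Set.mem_singleton _)
        have h1 : ψ ⁅x, y⁆ = 1 := by
          rw [map_commutatorElement]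
          exact commutatorElement_eq_one_iff_commute.2 hcomm
        have h2 : (⁅x, y⁆ : ∀ k, S k) i = ⁅a, b⁆ := by
          simp [commutatorElement_def, Pi.mul_apply, Pi.inv_apply, xi, yi]
        have h3 : (⁅x, y⁆ : ∀ k, S k) i ∈ N := by
          rw [ψapp] at h1
          exact (QuotientGroup.eq_one_iff _).mp h1
        rwa [h2] at h3
      have hNtop : N = ⊤ := by
        rw [eq_top_iff, ← hperf i, commutator_eq_closure]
        refine (Subgroup.closure_le _).2 ?_
        rintro c ⟨a, b, rfl⟩
        exact comm a b
      obtain ⟨h', h'H, hh'⟩ := IH f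
      have hmem : f i * (h' i)⁻¹ ∈ N := hNtop ▸ Subgroup.mem_top _
      obtain ⟨g, ⟨gH, gtriv⟩, gi⟩ := (hNmem _).1 hmem
      refine ⟨g * h', H.mul_mem gH h'H, ?_⟩
      intro k hk
      rcases eq_or_ne k i with rfl | hki
      · simp [Pi.mul_apply, gi]
      · have hkT' : k ∈ T' := Finset.mem_erase.2 ⟨hki, hk⟩
        simp [Pi.mul_apply, gtriv k hkT', hh' k hkT']
  rw [eq_top_iff]
  intro f _
  obtain ⟨h, hH, hh⟩ := key Finset.univ f
  have : h = f := funext fun k => hh k (Finset.mem_univ k)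
  exact this ▸ hH
end

section
/- Let φ : M → Q be a surjective homomorphism of finite groups, let N be a normal subgroup of M, and let P be a normal subgroup of Q with φ(N) ⊆ P. Suppose that no composition factor of P is isomorphic to a composition factor of the quotient M/N. Then φ(N) = P. -/
universe u

/-- `T` is a composition factor of `G`: some successive quotient of a composition series of
`G` is isomorphic to `T` (expressed via a surjective homomorphism with prescribed kernel). -/
def IsCompFactor (T : Type*) [Group T] (G : Type*) [Group G] : Prop :=
  ∃ (n : ℕ) (c : Fin (n + 1) → Subgroup G),
    c 0 = ⊥ ∧ c (Fin.last n) = ⊤ ∧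
    (∀ i : Fin n, c i.castSucc ≤ c i.succ ∧ c i.castSucc ≠ c i.succ ∧
      ((c i.castSucc).subgroupOf (c i.succ)).Normal ∧
      ∀ L : Subgroup G, c i.castSucc ≤ L → L ≤ c i.succ →
        (L.subgroupOf (c i.succ)).Normal → L = c i.castSucc ∨ L = c i.succ) ∧
    ∃ (i : Fin n) (φ : ↥(c i.succ) →* T), Function.Surjective φ ∧
      ∀ x : ↥(c i.succ), φ x = 1 ↔ (x : G) ∈ c i.castSucc

namespace CompFactorAux

variable {G : Type*} [Group G]

/-- one maximal step of a composition chain -/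
def Step (X Y : Subgroup G) : Prop :=
  X ≤ Y ∧ X ≠ Y ∧ (X.subgroupOf Y).Normal ∧
    ∀ L : Subgroup G, X ≤ L → L ≤ Y → (L.subgroupOf Y).Normal → L = X ∨ L = Y

lemma normal_subgroupOf_of_le {X Z Y : Subgroup G} (hXZ : X ≤ Z) (hZY : Z ≤ Y)
    (h : (X.subgroupOf Y).Normal) : (X.subgroupOf Z).Normal := by
  constructor
  intro n hn g
  have := h.conj_mem ⟨(n : G), hZY n.2⟩ (by simpa [Subgroup.mem_subgroupOf] using hn)
    ⟨(g : G), hZY g.2⟩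
  simpa [Subgroup.mem_subgroupOf] using this

lemma normal_subgroupOf_top {A : Subgroup G} (h : A.Normal) : (A.subgroupOf ⊤).Normal := by
  constructor
  intro n hn g
  simp only [Subgroup.mem_subgroupOf] at hn ⊢
  exact h.conj_mem _ hn _

lemma normal_of_normal_subgroupOf_top {A : Subgroup G} (h : (A.subgroupOf ⊤).Normal) :
    A.Normal := by
  constructor
  intro n hn g
  have := h.conj_mem ⟨n, trivial⟩ (by simpa [Subgroup.mem_subgroupOf] using hn) ⟨g, trivial⟩
  simpa [Subgroup.mem_subgroupOf] using this

lemma card_lt_of_lt [Finite G] {B Y : Subgroup G} (hle : B ≤ Y) (hne : B ≠ Y) :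
    Nat.card B < Nat.card Y := by
  have hss : (B : Set G) ⊂ (Y : Set G) := by
    refine ⟨hle, fun h => hne (SetLike.coe_injective (le_antisymm hle h))⟩
  have := Set.ncard_lt_ncard hss (Set.toFinite _)
  rw [← Nat.card_coe_set_eq, ← Nat.card_coe_set_eq] at this; exact this

/-- A composition chain from `A` up to `Y` exists whenever `A` is normal in `Y`. -/
lemma bigkey [Finite G] : ∀ (k : ℕ) (Y A : Subgroup G), Nat.card Y ≤ k → A ≤ Y →
    (A.subgroupOf Y).Normal →
    ∃ (n : ℕ) (c : Fin (n + 1) → Subgroup G), c 0 = A ∧ c (Fin.last n) = Y ∧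
      ∀ i : Fin n, Step (c i.castSucc) (c i.succ) := by
  intro k
  induction k with
  | zero => intro Y A hcard _ _; exact absurd hcard (by simpa using Nat.card_pos.ne')
  | succ k IH =>
    intro Y A hcard hAY hnorm
    by_cases hAeq : A = Y
    · exact ⟨0, fun _ => A, rfl, hAeq, fun i => i.elim0⟩
    · -- pick a maximal proper normal-in-Y subgroup containing A
      have : Finite (Subgroup G) := Finite.of_injective _ SetLike.coe_injective
      set s : Set (Subgroup G) :=
        {X | A ≤ X ∧ X ≤ Y ∧ X ≠ Y ∧ (X.subgroupOf Y).Normal} with hs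
      have hsA : A ∈ s := ⟨le_rfl, hAY, hAeq, hnorm⟩
      obtain ⟨B, hBs, hBmax⟩ := Set.Finite.exists_maximalFor id s (Set.toFinite s) ⟨A, hsA⟩
      obtain ⟨hAB, hBY, hBneY, hBnorm⟩ := hBs
      have hstep : Step B Y := by
        refine ⟨hBY, hBneY, hBnorm, ?_⟩
        intro L hBL hLY hLnorm
        by_cases hLeq : L = Y
        · exact Or.inr hLeq
        · exact Or.inl (le_antisymm (hBmax ⟨hAB.trans hBL, hLY, hLeq, hLnorm⟩ hBL) hBL)
      have hcardB : Nat.card B ≤ k := by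
        have := card_lt_of_lt hBY hBneY
        omega
      obtain ⟨n, c, hc0, hclast, hcstep⟩ :=
        IH B A hcardB hAB (normal_subgroupOf_of_le hAB hBY hnorm)
      refine ⟨n + 1, fun j => if h : j.val < n + 1 then c ⟨j.val, h⟩ else Y, ?_, ?_, ?_⟩
      · simpa using hc0
      · have : ¬ (Fin.last (n + 1)).val < n + 1 := by simp
        simpa [this]
      · intro i
        beta_reduce
        simp only [Fin.coe_castSucc, Fin.val_succ]
        by_cases hi : i.val < n
        · rw [dif_pos (show i.val < n + 1 by omega),
            dif_pos (show i.val + 1 < n + 1 by omega)]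
          exact hcstep ⟨i.val, hi⟩
        · have hieq : i.val = n := by omega
          rw [dif_pos (show i.val < n + 1 by omega),
            dif_neg (show ¬ i.val + 1 < n + 1 by omega)]
          have : (⟨i.val, by omega⟩ : Fin (n + 1)) = Fin.last n := by
            ext; simpa using hieq
          rw [this, hclast]
          exact hstep


lemma witness_of_eq {n : ℕ} (c : Fin (n + 1) → Subgroup G) (i : Fin n) {A C : Subgroup G}
    (h1 : c i.succ = A) (h2 : c i.castSucc = C) {T : Type*} [Group T]
    (f : ↥A →* T) (hf : Function.Surjective f) (hker : ∀ x : ↥A, f x = 1 ↔ (x : G) ∈ C) :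
    ∃ (i : Fin n) (φ : ↥(c i.succ) →* T), Function.Surjective φ ∧
      ∀ x : ↥(c i.succ), φ x = 1 ↔ (x : G) ∈ c i.castSucc := by
  subst h1
  subst h2
  exact ⟨i, f, hf, hker⟩

/-- The main tool: if `A` is normal in `G`, `Step C A` holds, and `T` is the quotient
`A/C` (via a surjection `f`), then `T` is a composition factor of `G`. -/
lemma main [Finite G] {A C : Subgroup G} (hA : A.Normal) (hstep : Step C A)
    {T : Type*} [Group T] (f : ↥A →* T) (hf : Function.Surjective f)
    (hker : ∀ x : ↥A, f x = 1 ↔ (x : G) ∈ C) : IsCompFactor T G := by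
  obtain ⟨hCA, hCneA, hCnorm, hCmax⟩ := hstep
  obtain ⟨m, low, hlow0, hlowlast, hlowstep⟩ :=
    bigkey (Nat.card C) C ⊥ le_rfl bot_le (by rw [Subgroup.bot_subgroupOf]; infer_instance)
  obtain ⟨k, high, hhigh0, hhighlast, hhighstep⟩ :=
    bigkey (Nat.card (⊤ : Subgroup G)) ⊤ A le_rfl le_top (normal_subgroupOf_top hA)
  refine ⟨m + 1 + k,
    fun j => if h : j.val < m + 1 then low ⟨j.val, h⟩
      else high ⟨j.val - (m + 1), by have := j.2; omega⟩, ?_, ?_, ?_, ?_⟩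
  · beta_reduce
    rw [dif_pos (show (0 : Fin (m + 1 + k + 1)).val < m + 1 by simp)]
    rw [← hlow0]
    congr 1
  · beta_reduce
    rw [dif_neg (show ¬ (Fin.last (m + 1 + k)).val < m + 1 by simp; omega)]
    rw [← hhighlast]
    congr 1
    ext
    simp [Fin.last]
  · intro i
    beta_reduce
    show Step _ _
    simp only [Fin.coe_castSucc, Fin.val_succ]
    rcases lt_trichotomy i.val m with hi | hi | hi
    · rw [dif_pos (show i.val < m + 1 by omega), dif_pos (show i.val + 1 < m + 1 by omega)]
      exact hlowstep ⟨i.val, hi⟩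
    · rw [dif_pos (show i.val < m + 1 by omega), dif_neg (show ¬ i.val + 1 < m + 1 by omega)]
      have h1 : (⟨i.val, by omega⟩ : Fin (m + 1)) = Fin.last m := by ext; simpa using hi
      have h2 : (⟨i.val + 1 - (m + 1), by have := i.2; omega⟩ : Fin (k + 1)) = 0 := by
        ext; simp; omega
      rw [h1, hlowlast, h2, hhigh0]
      exact (⟨hCA, hCneA, hCnorm, hCmax⟩ : Step C A)
    · rw [dif_neg (show ¬ i.val < m + 1 by omega), dif_neg (show ¬ i.val + 1 < m + 1 by omega)]
      have h2 : (⟨i.val + 1 - (m + 1), by have := i.2; omega⟩ : Fin (k + 1)) =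
          Fin.succ ⟨i.val - (m + 1), by have := i.2; omega⟩ := by
        ext; simp [Fin.succ]; omega
      rw [h2]
      exact hhighstep ⟨i.val - (m + 1), by have := i.2; omega⟩
  · refine witness_of_eq
      (fun j : Fin (m + 1 + k + 1) =>
        if h : j.val < m + 1 then low ⟨j.val, h⟩
          else high ⟨j.val - (m + 1), by have := j.2; omega⟩)
      (⟨m, by omega⟩ : Fin (m + 1 + k)) ?_ ?_ f hf hker
    · beta_reduce
      rw [dif_neg (show ¬ ((⟨m, by omega⟩ : Fin (m + 1 + k)).succ).val < m + 1 by simp)]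
      rw [← hhigh0]
      congr 1
      ext
      simp
    · beta_reduce
      rw [dif_pos (show ((⟨m, by omega⟩ : Fin (m + 1 + k)).castSucc).val < m + 1 by simp)]
      rw [← hlowlast]
      congr 1

end CompFactorAux

/-- If `φ : M → Q` is surjective, `N ⊴ M`, `P ⊴ Q`, `φ(N) ⊆ P`, and no composition factor
of `P` is isomorphic to a composition factor of `M/N`, then `φ(N) = P`. -/
theorem stmt_15 {M Q : Type u} [Group M] [Group Q] [Finite M] [Finite Q]
    (φ : M →* Q) (hφ : Function.Surjective φ)
    (N : Subgroup M) [N.Normal] (P : Subgroup Q) [P.Normal]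
    (hNP : Subgroup.map φ N ≤ P)
    (hdisj : ∀ (T : Type u) [Group T], IsCompFactor T ↥P → ¬ IsCompFactor T (M ⧸ N)) :
    Subgroup.map φ N = P := by
  classical
  by_contra hne
  set K : Subgroup Q := Subgroup.map φ N with hK
  have hKnorm : K.Normal := Subgroup.Normal.map ‹N.Normal› φ hφ
  have hKP : K ≤ P := hNP
  -- choose a maximal proper normal-in-P subgroup `C` of `P` containing `K`
  have finsub : Finite (Subgroup Q) := Finite.of_injective _ SetLike.coe_injective
  set s : Set (Subgroup Q) := {X | K ≤ X ∧ X ≤ P ∧ X ≠ P ∧ (X.subgroupOf P).Normal} with hs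
  have hKs : K ∈ s := ⟨le_rfl, hKP, hne, CompFactorAux.normal_subgroupOf_of_le hKP le_top
    (CompFactorAux.normal_subgroupOf_top hKnorm)⟩
  obtain ⟨C, hCs, hCmax'⟩ := Set.Finite.exists_maximalFor id s (Set.toFinite s) ⟨K, hKs⟩
  obtain ⟨hKC, hCP, hCneP, hCPnorm⟩ := hCs
  haveI := hCPnorm
  set T : Type u := ↥P ⧸ C.subgroupOf P with hT
  -- Claim 1 : T is a composition factor of P
  have claim1 : IsCompFactor T ↥P := by
    refine CompFactorAux.main (A := ⊤) (C := C.subgroupOf P) inferInstance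
      ⟨le_top, ?_, CompFactorAux.normal_subgroupOf_top hCPnorm, ?_⟩
      ((QuotientGroup.mk' (C.subgroupOf P)).comp Subgroup.topEquiv.toMonoidHom)
      (by intro t
          obtain ⟨x, hx⟩ := QuotientGroup.mk'_surjective (C.subgroupOf P) t
          exact ⟨⟨x, trivial⟩, hx⟩) ?_
    · intro h
      exact hCneP (le_antisymm hCP (Subgroup.subgroupOf_eq_top.mp h))
    · intro L hCL hLtop hLnorm
      have hLn : L.Normal := CompFactorAux.normal_of_normal_subgroupOf_top hLnorm
      set L' := L.map P.subtype with hL'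
      have hsub : L'.subgroupOf P = L :=
        Subgroup.comap_map_eq_self_of_injective P.subtype_injective L
      have hCL' : C ≤ L' := by
        intro c hc
        exact ⟨⟨c, hCP hc⟩, hCL (show (⟨c, hCP hc⟩ : ↥P) ∈ C.subgroupOf P from hc), rfl⟩
      have hL'norm : (L'.subgroupOf P).Normal := hsub ▸ hLn
      by_cases hL'P : L' = P
      · right
        rw [← hsub, hL'P, Subgroup.subgroupOf_self]
      · left
        have h3 : C = L' := le_antisymm hCL' (hCmax' ⟨hKC.trans hCL', Subgroup.map_subtype_le L, hL'P, hL'norm⟩ hCL')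
        rw [← hsub, ← h3]
    · intro x
      rw [MonoidHom.comp_apply, QuotientGroup.mk'_apply, QuotientGroup.eq_one_iff]
      exact Iff.rfl
  -- setup on the M side
  set π : M →* M ⧸ N := QuotientGroup.mk' N with hπ
  set Pm : Subgroup M := P.comap φ with hPm
  set Cm : Subgroup M := C.comap φ with hCm
  set A₂ : Subgroup (M ⧸ N) := Pm.map π with hA₂
  set C₂ : Subgroup (M ⧸ N) := Cm.map π with hC₂
  have hNPm : N ≤ Pm := Subgroup.map_le_iff_le_comap.mp hNP
  have hNCm : N ≤ Cm := Subgroup.map_le_iff_le_comap.mp hKC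
  have hkerCm : φ.ker ≤ Cm := Subgroup.ker_le_comap (f := φ) C
  have hCmPm : Cm ≤ Pm := Subgroup.comap_mono hCP
  have hPmnorm : Pm.Normal := Subgroup.Normal.comap ‹P.Normal› φ
  have hA₂norm : A₂.Normal := Subgroup.Normal.map hPmnorm π (QuotientGroup.mk'_surjective N)
  have hmapCm : Cm.map φ = C := Subgroup.map_comap_eq_self_of_surjective hφ C
  have hmapPm : Pm.map φ = P := Subgroup.map_comap_eq_self_of_surjective hφ P
  have hcomapC₂ : C₂.comap π = Cm := by
    refine Subgroup.comap_map_eq_self ?_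
    rw [hπ, QuotientGroup.ker_mk']
    exact hNCm
  have hcomapA₂ : A₂.comap π = Pm := by
    refine Subgroup.comap_map_eq_self ?_
    rw [hπ, QuotientGroup.ker_mk']
    exact hNPm
  -- the step for claim 2
  have hstep2 : CompFactorAux.Step C₂ A₂ := by
    refine ⟨Subgroup.map_mono hCmPm, ?_, ?_, ?_⟩
    · intro h
      apply hCneP
      have h1 : Cm = Pm := by rw [← hcomapC₂, ← hcomapA₂, h]
      rw [← hmapCm, h1, hmapPm]
    · constructor
      intro n hn g
      rw [Subgroup.mem_subgroupOf] at hn ⊢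
      obtain ⟨c, hc, hcn⟩ := hn
      obtain ⟨p, hp, hpg⟩ := g.2
      have hmem : p * c * p⁻¹ ∈ Cm := by
        have hc' : φ c ∈ C := hc
        have hp' : φ p ∈ P := hp
        have h1 := hCPnorm.conj_mem ⟨φ c, hCP hc'⟩
          (by simpa [Subgroup.mem_subgroupOf] using hc') ⟨φ p, hp'⟩
        rw [Subgroup.mem_subgroupOf] at h1
        have h2 : φ p * φ c * (φ p)⁻¹ ∈ C := by simpa using h1
        show φ (p * c * p⁻¹) ∈ C
        rw [map_mul, map_mul, map_inv]
        exact h2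
      refine ⟨p * c * p⁻¹, hmem, ?_⟩
      rw [map_mul, map_mul, map_inv, hcn, hpg]
      rfl
    · intro L hCL hLA hLnorm
      set L' : Subgroup M := L.comap π with hL'
      set L'' : Subgroup Q := L'.map φ with hL''
      have hCmL' : Cm ≤ L' := by rw [← hcomapC₂]; exact Subgroup.comap_mono hCL
      have hL'Pm : L' ≤ Pm := by rw [← hcomapA₂]; exact Subgroup.comap_mono hLA
      have hCL'' : C ≤ L'' := by rw [← hmapCm]; exact Subgroup.map_mono hCmL'
      have hL''P : L'' ≤ P := by rw [← hmapPm]; exact Subgroup.map_mono hL'Pm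
      have hL''norm : (L''.subgroupOf P).Normal := by
        constructor
        intro n hn g
        rw [Subgroup.mem_subgroupOf] at hn ⊢
        obtain ⟨m1, hm1, hφm1⟩ := hn
        obtain ⟨p, hpg⟩ := hφ (g : Q)
        have hp : p ∈ Pm := by
          rw [hPm, Subgroup.mem_comap, hpg]
          exact g.2
        have hmem : p * m1 * p⁻¹ ∈ L' := by
          have h1 := hLnorm.conj_mem ⟨π m1, hLA hm1⟩
            (by rw [Subgroup.mem_subgroupOf]; exact hm1) ⟨π p, ⟨p, hp, rfl⟩⟩
          rw [Subgroup.mem_subgroupOf] at h1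
          have h2 : π p * π m1 * (π p)⁻¹ ∈ L := by simpa using h1
          show π (p * m1 * p⁻¹) ∈ L
          rw [map_mul, map_mul, map_inv]
          exact h2
        exact ⟨p * m1 * p⁻¹, hmem, by rw [map_mul, map_mul, map_inv, hφm1, hpg]; rfl⟩
      have hrecL : L = L'.map π :=
        (Subgroup.map_comap_eq_self_of_surjective (QuotientGroup.mk'_surjective N) L).symm
      have hrecL' : L' = L''.comap φ :=
        (Subgroup.comap_map_eq_self (hkerCm.trans hCmL')).symm
      by_cases hL''eq : L'' = P
      · right
        rw [hrecL, hrecL', hL''eq]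
      · left
        have hCeq : C = L'' :=
          le_antisymm hCL'' (hCmax' ⟨hKC.trans hCL'', hL''P, hL''eq, hL''norm⟩ hCL'')
        rw [hrecL, hrecL', ← hCeq]
  haveI hC₂norm : (C₂.subgroupOf A₂).Normal := hstep2.2.2.1
  -- construct the surjection from A₂ onto T
  have claim2 : IsCompFactor T (M ⧸ N) := by
    set u₂ : ↥Pm →* (↥A₂ ⧸ C₂.subgroupOf A₂) :=
      (QuotientGroup.mk' (C₂.subgroupOf A₂)).comp (π.subgroupMap Pm) with hu₂def
    have hu₂ : Function.Surjective u₂ :=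
      (QuotientGroup.mk'_surjective _).comp (π.subgroupMap_surjective Pm)
    set φP : ↥Pm →* ↥P := (φ.domRestrict Pm).codRestrict P (fun x => x.2) with hφP
    set v : ↥Pm →* T := (QuotientGroup.mk' (C.subgroupOf P)).comp φP with hv
    have hvsurj : Function.Surjective v := by
      refine (QuotientGroup.mk'_surjective _).comp ?_
      intro y
      obtain ⟨x, hx⟩ := hφ (y : Q)
      have hxPm : x ∈ Pm := by rw [hPm, Subgroup.mem_comap, hx]; exact y.2
      exact ⟨⟨x, hxPm⟩, Subtype.ext hx⟩
    have hkereq : u₂.ker = v.ker := by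
      ext x
      have h1 : u₂ x = 1 ↔ (π (x : M)) ∈ C₂ := by
        rw [hu₂def, MonoidHom.comp_apply, QuotientGroup.mk'_apply, QuotientGroup.eq_one_iff,
          Subgroup.mem_subgroupOf]
        rfl
      have h2 : v x = 1 ↔ φ (x : M) ∈ C := by
        rw [hv, MonoidHom.comp_apply, QuotientGroup.mk'_apply, QuotientGroup.eq_one_iff,
          Subgroup.mem_subgroupOf]
        rfl
      rw [MonoidHom.mem_ker, MonoidHom.mem_ker, h1, h2]
      rw [show (π (x : M) ∈ C₂ ↔ (x : M) ∈ C₂.comap π) from Iff.rfl, hcomapC₂]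
      rfl
    set e : (↥A₂ ⧸ C₂.subgroupOf A₂) ≃* T :=
      ((QuotientGroup.quotientKerEquivOfSurjective u₂ hu₂).symm.trans
        (QuotientGroup.quotientMulEquivOfEq hkereq)).trans
        (QuotientGroup.quotientKerEquivOfSurjective v hvsurj) with he
    refine CompFactorAux.main hA₂norm hstep2
      (e.toMonoidHom.comp (QuotientGroup.mk' (C₂.subgroupOf A₂)))
      (e.surjective.comp (QuotientGroup.mk'_surjective _)) ?_
    intro x
    rw [MonoidHom.comp_apply, MulEquiv.coe_toMonoidHom, MulEquiv.map_eq_one_iff,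
      QuotientGroup.mk'_apply, QuotientGroup.eq_one_iff, Subgroup.mem_subgroupOf]
  exact hdisj T claim1 claim2
end

section
/- Let G be a finite group, G_g a normal subgroup of G, and M a maximal proper subgroup of G such that the quotient map M → G/G_g is surjective. Set C = ⋃_{g∈G} gMg^{-1}. Then C ∩ G_g = ⋃_{g∈G_g} g(M ∩ G_g)g^{-1}, M ∩ G_g is a proper subgroup of G_g, and hence |C ∩ G_g| ≤ |G_g| - 1. -/
/-- **Jordan's lemma**: a finite group is not the union of the conjugates of a proper
subgroup. -/
lemma jordan_aux {H : Type*} [Group H] [Fintype H] (K : Subgroup H) (hK : K ≠ ⊤) :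
    ∃ x : H, ∀ h : H, x ∉ (fun k => h * k * h⁻¹) '' (K : Set H) := by
  classical
  -- Burnside's lemma for the action of `H` on `H ⧸ K`.
  have hcardΩ : Fintype.card (MulAction.orbitRel.Quotient H (H ⧸ K)) = 1 := by
    have hsub : Subsingleton (MulAction.orbitRel.Quotient H (H ⧸ K)) := by
      constructor
      rintro ⟨a⟩ ⟨b⟩
      refine Quotient.sound ?_
      obtain ⟨g, hg⟩ := MulAction.exists_smul_eq H b a
      exact ⟨g, hg⟩
    have : Nonempty (MulAction.orbitRel.Quotient H (H ⧸ K)) :=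
      ⟨Quotient.mk _ ((1 : H) : H ⧸ K)⟩
    obtain ⟨x⟩ := this
    rw [Fintype.card_eq_one_iff]
    exact ⟨x, fun y => Subsingleton.elim y x⟩
  have hburn := MulAction.sum_card_fixedBy_eq_card_orbits_mul_card_group H (H ⧸ K)
  rw [hcardΩ, one_mul] at hburn
  -- the identity fixes at least two points
  have h2 : 2 ≤ Fintype.card (MulAction.fixedBy (H ⧸ K) (1 : H)) := by
    have : MulAction.fixedBy (H ⧸ K) (1 : H) = Set.univ := by
      ext q; simp [MulAction.mem_fixedBy]
    have hcard : Fintype.card (H ⧸ K) ≤ Fintype.card (MulAction.fixedBy (H ⧸ K) (1 : H)) :=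
      Fintype.card_le_of_injective (fun q => ⟨q, by simp [MulAction.mem_fixedBy]⟩)
        (fun a b hab => congrArg Subtype.val hab)
    have hne1 : Fintype.card (H ⧸ K) ≠ 1 := by
      intro h1
      apply hK
      rw [eq_top_iff]
      intro x _
      have hx1 : ((x : H) : H ⧸ K) = ((1 : H) : H ⧸ K) :=
        Fintype.card_le_one_iff.mp h1.le _ _
      rw [QuotientGroup.eq] at hx1
      simpa using K.inv_mem (by simpa using hx1)
    have hpos : 0 < Fintype.card (H ⧸ K) := Fintype.card_pos
    omega
  -- hence some element fixes no point of `H ⧸ K`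
  have hex : ∃ x : H, Fintype.card (MulAction.fixedBy (H ⧸ K) x) = 0 := by
    by_contra hc
    push_neg at hc
    have hone : ∀ x : H, 1 ≤ Fintype.card (MulAction.fixedBy (H ⧸ K) x) := fun x =>
      Nat.one_le_iff_ne_zero.mpr (hc x)
    have h1univ : (1 : H) ∈ (Finset.univ : Finset H) := Finset.mem_univ _
    have hsplit : Fintype.card (MulAction.fixedBy (H ⧸ K) (1 : H)) +
        ∑ x ∈ Finset.univ.erase (1 : H), Fintype.card (MulAction.fixedBy (H ⧸ K) x) =
        Fintype.card H := by
      rw [Finset.add_sum_erase Finset.univ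
        (fun x : H => Fintype.card (MulAction.fixedBy (H ⧸ K) x)) h1univ]
      exact hburn
    have hsum : (Finset.univ.erase (1 : H)).card • 1 ≤
        ∑ x ∈ Finset.univ.erase (1 : H), Fintype.card (MulAction.fixedBy (H ⧸ K) x) :=
      Finset.card_nsmul_le_sum _ _ _ (fun x _ => hone x)
    rw [Finset.card_erase_of_mem h1univ, Finset.card_univ, smul_eq_mul, mul_one] at hsum
    omega
  obtain ⟨x, hx⟩ := hex
  refine ⟨x, fun h => ?_⟩
  rintro ⟨k, hk, hkx⟩
  have hfix : ((h : H) : H ⧸ K) ∈ MulAction.fixedBy (H ⧸ K) x := by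
    rw [MulAction.mem_fixedBy]
    show ((x * h : H) : H ⧸ K) = ((h : H) : H ⧸ K)
    rw [QuotientGroup.eq]
    have hkinv : (x * h)⁻¹ * h = k⁻¹ := by
      rw [← hkx]; group
    rw [hkinv]
    exact K.inv_mem hk
  exact (Fintype.card_pos_iff.mpr ⟨⟨_, hfix⟩⟩).ne' hx

/-- For a maximal subgroup `M` of a finite group `G` surjecting onto `G/G_g`, the
intersection of `⋃ gMg⁻¹` with `G_g` is the union of the `G_g`-conjugates of `M ∩ G_g`,
which is a proper subgroup of `G_g`; hence `|C ∩ G_g| ≤ |G_g| - 1`. -/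
theorem stmt_17 {G : Type*} [Group G] [Fintype G] (Gg : Subgroup G) [Gg.Normal]
    (M : Subgroup G) (hMne : M ≠ ⊤)
    (hmax : ∀ M' : Subgroup G, M < M' → M' = ⊤)
    (hsurj : ∀ x : G, ∃ m ∈ M, ∃ h ∈ Gg, x = m * h) :
    ((⋃ g : G, (fun m => g * m * g⁻¹) '' (M : Set G)) ∩ (Gg : Set G) =
      ⋃ g ∈ Gg, (fun m => g * m * g⁻¹) '' ((M ⊓ Gg : Subgroup G) : Set G)) ∧
    M ⊓ Gg < Gg ∧
    ((⋃ g : G, (fun m => g * m * g⁻¹) '' (M : Set G)) ∩ (Gg : Set G)).ncard ≤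
      Nat.card Gg - 1 := by
  classical
  -- Part 1: the set equality
  have part1 : (⋃ g : G, (fun m => g * m * g⁻¹) '' (M : Set G)) ∩ (Gg : Set G) =
      ⋃ g ∈ Gg, (fun m => g * m * g⁻¹) '' ((M ⊓ Gg : Subgroup G) : Set G) := by
    ext x
    constructor
    · rintro ⟨hx1, hxGg⟩
      simp only [Set.mem_iUnion, Set.mem_image] at hx1
      obtain ⟨g, y, hyM, hxy⟩ := hx1
      -- write g = m' * h' hence g = h * m with h ∈ Gg, m ∈ M : use hsurj on g⁻¹
      obtain ⟨m, hm, h, hh, hg⟩ := hsurj g⁻¹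
      have hgeq : g = h⁻¹ * m⁻¹ := by
        have := congrArg (·⁻¹) hg
        simpa [mul_inv_rev] using this
      set z : G := m⁻¹ * y * m with hz
      have hzM : z ∈ M := M.mul_mem (M.mul_mem (M.inv_mem hm) hyM) hm
      have hxz : x = h⁻¹ * z * (h⁻¹)⁻¹ := by
        rw [← hxy, hgeq, hz]; group
      have hzGg : z ∈ Gg := by
        have : z = h * x * h⁻¹ := by rw [hxz]; group
        rw [this]
        exact (Subgroup.Normal.conj_mem ‹Gg.Normal› x hxGg h)
      simp only [Set.mem_iUnion, Set.mem_image]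
      exact ⟨h⁻¹, Gg.inv_mem hh, z, ⟨hzM, hzGg⟩, hxz.symm⟩
    · intro hx
      simp only [Set.mem_iUnion, Set.mem_image] at hx
      obtain ⟨g, hgGg, y, hy, hxy⟩ := hx
      have hyM : y ∈ M := hy.1
      have hyGg : y ∈ Gg := hy.2
      constructor
      · simp only [Set.mem_iUnion, Set.mem_image]
        exact ⟨g, y, hyM, hxy⟩
      · rw [← hxy]
        exact Gg.mul_mem (Gg.mul_mem hgGg hyGg) (Gg.inv_mem hgGg)
  -- Part 2: M ⊓ Gg < Gg
  have part2 : M ⊓ Gg < Gg := by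
    refine lt_of_le_of_ne inf_le_right ?_
    intro heq
    apply hMne
    have hGgM : Gg ≤ M := by
      intro x hx
      have hxin : x ∈ M ⊓ Gg := by rw [heq]; exact hx
      exact hxin.1
    rw [eq_top_iff]
    intro x _
    obtain ⟨m, hm, h, hh, hx⟩ := hsurj x
    rw [hx]
    exact M.mul_mem hm (hGgM hh)
  refine ⟨part1, part2, ?_⟩
  -- Part 3: cardinality
  -- apply Jordan's lemma inside Gg
  have hKne : (M ⊓ Gg).subgroupOf Gg ≠ ⊤ := by
    intro htop
    apply part2.ne
    refine le_antisymm inf_le_right (fun x hx => ?_)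
    have hmem : (⟨x, hx⟩ : Gg) ∈ (M ⊓ Gg).subgroupOf Gg := htop ▸ Subgroup.mem_top _
    exact Subgroup.mem_subgroupOf.mp hmem
  obtain ⟨x, hxnot⟩ := jordan_aux ((M ⊓ Gg).subgroupOf Gg) hKne
  -- (x : G) is in Gg but not in the union
  have hxmemGg : (x : G) ∈ (Gg : Set G) := x.2
  have hxnotin : (x : G) ∉ (⋃ g : G, (fun m => g * m * g⁻¹) '' (M : Set G)) ∩ (Gg : Set G) := by
    rw [part1]
    intro hmem
    simp only [Set.mem_iUnion, Set.mem_image] at hmem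
    obtain ⟨g, hgGg, y, hy, hxy⟩ := hmem
    apply hxnot ⟨g, hgGg⟩
    refine ⟨⟨y, hy.2⟩, ?_, ?_⟩
    · exact hy
    · apply Subtype.ext
      exact hxy
  have hsubset : (⋃ g : G, (fun m => g * m * g⁻¹) '' (M : Set G)) ∩ (Gg : Set G) ⊆
      (Gg : Set G) \ {(x : G)} := by
    intro y hy
    refine ⟨hy.2, ?_⟩
    intro hyx
    rw [Set.mem_singleton_iff] at hyx
    exact hxnotin (hyx ▸ hy)
  have hle := Set.ncard_le_ncard hsubset (Set.toFinite _)
  have hdiff : ((Gg : Set G) \ {(x : G)}).ncard = (Gg : Set G).ncard - 1 :=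
    Set.ncard_diff_singleton_of_mem hxmemGg
  have hGgcard : (Gg : Set G).ncard = Nat.card Gg := by
    rw [← Nat.card_coe_set_eq]; rfl
  omega
end
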